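/- For all integers b ≥ 1 and natural numbers m, n with 2bm + n ≥ 4, the sum over pairs (i, j) with 0 ≤ i ≤ m, 0 ≤ j ≤ n, and 2 ≤ 2bi + j ≤ 2bm + n − 2 of (2bi + j − 2)! * (2b(m − i) + n − j − 2)! / (i! * j! * (m − i)! * (n − j)!) is at most 2π² * (2bm + n − 2)! / (m! * n!). -/

import Mathlib

open Real Finset

-- Vandermonde inequality
lemma choose_mul_choose_le (a c s t : ℕ) :
    a.choose s * c.choose t ≤ (a + c).choose (s + t) := by
  rw [Nat.add_choose_eq]
  exact Finset.single_le_sum (f := fun ij => a.choose ij.1 * c.choose ij.2)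
    (fun i _ => Nat.zero_le _) (a := (s, t)) (Finset.HasAntidiagonal.mem_antidiagonal.2 rfl)

lemma choose_le_mul (d m i : ℕ) (hd : 1 ≤ d) (hi : i ≤ m) :
    m.choose i ≤ (d * m).choose (d * i) := by
  induction d with
  | zero => omega
  | succ e ih =>
    rcases Nat.eq_or_lt_of_le hd with h1 | h1
    · simp [← h1]
    · have he : 1 ≤ e := by omega
      calc m.choose i ≤ 1 * m.choose i := by omega
        _ ≤ (e * m).choose (e * i) * m.choose i :=
            Nat.mul_le_mul_right _ (Nat.one_le_iff_ne_zero.2 (Nat.choose_pos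
              (Nat.mul_le_mul_left _ hi)).ne')
        _ ≤ (e * m + m).choose (e * i + i) := choose_mul_choose_le _ _ _ _
        _ = ((e+1) * m).choose ((e+1) * i) := by ring_nf

lemma fiber_sum_le (b m n k : ℕ) (hb : 1 ≤ b) :
    ∑ p ∈ (Finset.range (m+1) ×ˢ Finset.range (n+1)).filter
        (fun p => 2 * b * p.1 + p.2 = k), m.choose p.1 * n.choose p.2
      ≤ (2 * b * m + n).choose k := by
  have step1 : ∑ p ∈ (Finset.range (m+1) ×ˢ Finset.range (n+1)).filter
        (fun p => 2 * b * p.1 + p.2 = k), m.choose p.1 * n.choose p.2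
      ≤ ∑ p ∈ (Finset.range (m+1) ×ˢ Finset.range (n+1)).filter
        (fun p => 2 * b * p.1 + p.2 = k), (2*b*m).choose (2*b*p.1) * n.choose p.2 := by
    apply Finset.sum_le_sum
    intro p hp
    simp only [Finset.mem_filter, Finset.mem_product, Finset.mem_range] at hp
    exact Nat.mul_le_mul_right _ (choose_le_mul (2*b) m p.1 (by omega) (by omega))
  refine step1.trans ?_
  set S := (Finset.range (m+1) ×ˢ Finset.range (n+1)).filter
      (fun p => 2 * b * p.1 + p.2 = k) with hS
  have hinj : ∀ p ∈ S, ∀ q ∈ S,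
      (fun p : ℕ × ℕ => (2*b*p.1, p.2)) p = (fun p : ℕ × ℕ => (2*b*p.1, p.2)) q → p = q := by
    intro p _ q _ h
    simp only [Prod.mk.injEq] at h
    have h1 : p.1 = q.1 := Nat.eq_of_mul_eq_mul_left (by omega) h.1
    exact Prod.ext h1 h.2
  have himg := Finset.sum_image (f := fun q : ℕ × ℕ => (2*b*m).choose q.1 * n.choose q.2) hinj
  rw [← himg, Nat.add_choose_eq]
  apply Finset.sum_le_sum_of_subset
  intro q hq
  simp only [Finset.mem_image, Finset.mem_filter, hS] at hq
  obtain ⟨p, ⟨_, hk⟩, rfl⟩ := hq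
  exact Finset.HasAntidiagonal.mem_antidiagonal.2 hk

lemma nat_key (b m n : ℕ) (hb : 1 ≤ b) :
    ∑ p ∈ Finset.range (m+1) ×ˢ Finset.range (n+1),
      (if 2 ≤ 2*b*p.1 + p.2 ∧ 2*b*p.1 + p.2 ≤ 2*b*m + n - 2 then
        m.choose p.1 * n.choose p.2 * (2*b*p.1+p.2-2).factorial
          * (2*b*m+n-(2*b*p.1+p.2)-2).factorial
       else 0)
    ≤ ∑ k ∈ Finset.Icc 2 (2*b*m+n-2),
        (2*b*m+n).choose k * (k-2).factorial * (2*b*m+n-k-2).factorial := by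
  set N := 2*b*m+n with hN
  have hmaps : ∀ p ∈ Finset.range (m+1) ×ˢ Finset.range (n+1),
      (2*b*p.1 + p.2) ∈ Finset.range (N+1) := by
    intro p hp
    simp only [Finset.mem_product, Finset.mem_range] at hp ⊢
    have : 2*b*p.1 ≤ 2*b*m := Nat.mul_le_mul_left _ (by omega)
    omega
  rw [← Finset.sum_fiberwise_of_maps_to hmaps]
  have hIcc : ∑ k ∈ Finset.Icc 2 (N-2),
        N.choose k * (k-2).factorial * (N-k-2).factorial
      = ∑ k ∈ Finset.range (N+1),
        (if 2 ≤ k ∧ k ≤ N - 2 then N.choose k * (k-2).factorial * (N-k-2).factorial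
         else 0) := by
    rw [← Finset.sum_filter]
    apply Finset.sum_congr _ (fun _ _ => rfl)
    ext k
    simp only [Finset.mem_Icc, Finset.mem_filter, Finset.mem_range]
    omega
  rw [hIcc]
  apply Finset.sum_le_sum
  intro k _
  by_cases hk : 2 ≤ k ∧ k ≤ N - 2
  · rw [if_pos hk]
    have hterm : ∀ p ∈ (Finset.range (m+1) ×ˢ Finset.range (n+1)).filter
        (fun p => 2*b*p.1 + p.2 = k),
        (if 2 ≤ 2*b*p.1 + p.2 ∧ 2*b*p.1 + p.2 ≤ N - 2 then
          m.choose p.1 * n.choose p.2 * (2*b*p.1+p.2-2).factorial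
            * (N-(2*b*p.1+p.2)-2).factorial
         else 0)
        = m.choose p.1 * n.choose p.2 * ((k-2).factorial * (N-k-2).factorial) := by
      intro p hp
      have hpk : 2*b*p.1 + p.2 = k := (Finset.mem_filter.1 hp).2
      rw [hpk, if_pos hk, mul_assoc]
    rw [Finset.sum_congr rfl hterm, ← Finset.sum_mul]
    rw [show N.choose k * (k-2).factorial * (N-k-2).factorial
        = N.choose k * ((k-2).factorial * (N-k-2).factorial) by ring]
    exact Nat.mul_le_mul_right _ (fiber_sum_le b m n k hb)
  · rw [if_neg hk]
    apply Nat.le_of_eq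
    apply Finset.sum_eq_zero
    intro p hp
    have hpk : 2*b*p.1 + p.2 = k := (Finset.mem_filter.1 hp).2
    rw [hpk, if_neg hk]

lemma basel_partial (s : Finset ℕ) : ∑ l ∈ s, 1/((l:ℝ))^2 ≤ π^2/6 := by
  have h := hasSum_zeta_two
  calc ∑ l ∈ s, 1/((l:ℝ))^2 ≤ ∑' l : ℕ, 1/((l:ℝ))^2 :=
        Summable.sum_le_tsum s (fun i _ => by positivity) h.summable
    _ = π^2/6 := h.tsum_eq

lemma aux_frac (a c : ℝ) (ha : 0 < a) (hc : 0 < c) :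
    1/(a^2*c^2) ≤ 2/(a+c)^2 * (1/a^2 + 1/c^2) := by
  have h1 : (0:ℝ) < (a+c)^2 := by positivity
  rw [div_le_iff₀ (by positivity), mul_comm]
  have key : (a+c)^2 ≤ 2*(a^2+c^2) := by nlinarith [sq_nonneg (a-c)]
  field_simp
  nlinarith [sq_nonneg (a-c), sq_nonneg (a*c), mul_pos ha hc, mul_pos (mul_pos ha ha) (mul_pos hc hc)]

lemma real_key (N : ℕ) (hN : 4 ≤ N) :
    ∑ k ∈ Finset.Icc 2 (N-2),
        ((N.choose k : ℝ) * ((k-2).factorial : ℝ) * ((N-k-2).factorial : ℝ))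
      ≤ 2 * π^2 * ((N-2).factorial : ℝ) := by
  set M : ℝ := ((N-2 : ℕ) : ℝ) with hM
  have hMpos : 0 < M := by
    rw [hM]; exact_mod_cast Nat.sub_pos_of_lt (by omega)
  -- termwise bound
  have hterm : ∀ k ∈ Finset.Icc 2 (N-2),
      (N.choose k : ℝ) * ((k-2).factorial : ℝ) * ((N-k-2).factorial : ℝ)
      ≤ (N.factorial : ℝ) * (2/M^2)
          * (1/((k-1:ℕ):ℝ)^2 + 1/((N-k-1:ℕ):ℝ)^2) := by
    intro k hk
    simp only [Finset.mem_Icc] at hk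
    have hk2 : 2 ≤ k := hk.1
    have hkN : k ≤ N - 2 := hk.2
    have ha : (0:ℝ) < ((k-1:ℕ):ℝ) := by exact_mod_cast Nat.sub_pos_of_lt (by omega)
    have hc : (0:ℝ) < ((N-k-1:ℕ):ℝ) := by exact_mod_cast Nat.sub_pos_of_lt (by omega)
    have ha0 : (0:ℝ) < ((k:ℕ):ℝ) := by positivity
    have hc0 : (0:ℝ) < ((N-k:ℕ):ℝ) := by exact_mod_cast Nat.sub_pos_of_lt (by omega)
    -- factorial identities
    have h1 : N.choose k * k.factorial * (N-k).factorial = N.factorial :=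
      Nat.choose_mul_factorial_mul_factorial (by omega)
    have h2 : k.factorial = k * ((k-1) * (k-2).factorial) := by
      have e : k = (k-2) + 2 := by omega
      rw [e]
      rw [show k - 2 + 2 - 1 = (k-2) + 1 by omega, show k - 2 + 2 - 2 = k - 2 by omega] at *
      rw [show (k-2) + 2 = ((k-2)+1)+1 by omega, Nat.factorial_succ, Nat.factorial_succ]
    have h3 : (N-k).factorial = (N-k) * ((N-k-1) * (N-k-2).factorial) := by
      have e : N - k = (N-k-2) + 2 := by omega
      rw [e, show N-k-2+2-1 = (N-k-2)+1 by omega, show N-k-2+2-2 = N-k-2 by omega] at *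
      rw [show (N-k-2) + 2 = ((N-k-2)+1)+1 by omega, Nat.factorial_succ, Nat.factorial_succ]
    have h2' : (k.factorial : ℝ) = ((k:ℕ):ℝ) * (((k-1:ℕ):ℝ) * ((k-2).factorial : ℝ)) := by
      rw [h2]; push_cast; ring
    have h3' : ((N-k).factorial : ℝ)
        = ((N-k:ℕ):ℝ) * (((N-k-1:ℕ):ℝ) * ((N-k-2).factorial : ℝ)) := by
      rw [h3]; push_cast; ring
    have h1' : (N.choose k : ℝ) * (k.factorial : ℝ) * ((N-k).factorial : ℝ)
        = (N.factorial : ℝ) := by exact_mod_cast congrArg (Nat.cast (R := ℝ)) h1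
    rw [h2', h3'] at h1'
    -- step 1: equality
    have heq : (N.choose k : ℝ) * ((k-2).factorial : ℝ) * ((N-k-2).factorial : ℝ)
        = (N.factorial : ℝ) * (1/(((k:ℕ):ℝ) * ((k-1:ℕ):ℝ) * ((N-k:ℕ):ℝ) * ((N-k-1:ℕ):ℝ))) := by
      rw [mul_one_div, eq_div_iff (by positivity), ← h1']
      ring
    rw [heq]
    -- step 2: inequality chain
    have hstep2 : 1/(((k:ℕ):ℝ) * ((k-1:ℕ):ℝ) * ((N-k:ℕ):ℝ) * ((N-k-1:ℕ):ℝ))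
        ≤ 1/(((k-1:ℕ):ℝ)^2 * ((N-k-1:ℕ):ℝ)^2) := by
      apply one_div_le_one_div_of_le (by positivity)
      have e1 : ((k-1:ℕ):ℝ) ≤ ((k:ℕ):ℝ) := by exact_mod_cast Nat.sub_le k 1
      have e2 : ((N-k-1:ℕ):ℝ) ≤ ((N-k:ℕ):ℝ) := by exact_mod_cast Nat.sub_le (N-k) 1
      have h4 : ((k-1:ℕ):ℝ) * ((N-k-1:ℕ):ℝ) ≤ ((k:ℕ):ℝ) * ((N-k:ℕ):ℝ) :=
        mul_le_mul e1 e2 hc.le ha0.le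
      calc ((k-1:ℕ):ℝ)^2 * ((N-k-1:ℕ):ℝ)^2
          = (((k-1:ℕ):ℝ)*((N-k-1:ℕ):ℝ)) * (((k-1:ℕ):ℝ)*((N-k-1:ℕ):ℝ)) := by ring
        _ ≤ (((k-1:ℕ):ℝ)*((N-k-1:ℕ):ℝ)) * (((k:ℕ):ℝ)*((N-k:ℕ):ℝ)) :=
            mul_le_mul_of_nonneg_left h4 (by positivity)
        _ = ((k:ℕ):ℝ) * ((k-1:ℕ):ℝ) * ((N-k:ℕ):ℝ) * ((N-k-1:ℕ):ℝ) := by ring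
    have hsum : ((k-1:ℕ):ℝ) + ((N-k-1:ℕ):ℝ) = M := by
      rw [hM]
      have : (k-1) + (N-k-1) = N - 2 := by omega
      exact_mod_cast congrArg (Nat.cast (R := ℝ)) this
    have hstep3 : 1/(((k-1:ℕ):ℝ)^2 * ((N-k-1:ℕ):ℝ)^2)
        ≤ 2/M^2 * (1/((k-1:ℕ):ℝ)^2 + 1/((N-k-1:ℕ):ℝ)^2) := by
      rw [← hsum]
      exact aux_frac _ _ ha hc
    have hNf : (0:ℝ) ≤ (N.factorial : ℝ) := by positivity
    calc (N.factorial : ℝ) * (1/(((k:ℕ):ℝ) * ((k-1:ℕ):ℝ) * ((N-k:ℕ):ℝ) * ((N-k-1:ℕ):ℝ)))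
        ≤ (N.factorial : ℝ) * (2/M^2 * (1/((k-1:ℕ):ℝ)^2 + 1/((N-k-1:ℕ):ℝ)^2)) :=
          mul_le_mul_of_nonneg_left (hstep2.trans hstep3) hNf
      _ = (N.factorial : ℝ) * (2/M^2) * (1/((k-1:ℕ):ℝ)^2 + 1/((N-k-1:ℕ):ℝ)^2) := by ring
  calc ∑ k ∈ Finset.Icc 2 (N-2),
        ((N.choose k : ℝ) * ((k-2).factorial : ℝ) * ((N-k-2).factorial : ℝ))
      ≤ ∑ k ∈ Finset.Icc 2 (N-2), (N.factorial : ℝ) * (2/M^2)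
          * (1/((k-1:ℕ):ℝ)^2 + 1/((N-k-1:ℕ):ℝ)^2) := Finset.sum_le_sum hterm
    _ = (N.factorial : ℝ) * (2/M^2) * ∑ k ∈ Finset.Icc 2 (N-2),
          (1/((k-1:ℕ):ℝ)^2 + 1/((N-k-1:ℕ):ℝ)^2) := by rw [← Finset.mul_sum]
    _ ≤ (N.factorial : ℝ) * (2/M^2) * (π^2/3) := by
        apply mul_le_mul_of_nonneg_left _ (by positivity)
        rw [Finset.sum_add_distrib]
        have p1 : ∑ k ∈ Finset.Icc 2 (N-2), 1/((k-1:ℕ):ℝ)^2 ≤ π^2/6 := by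
          have hinj : ∀ p ∈ Finset.Icc 2 (N-2), ∀ q ∈ Finset.Icc 2 (N-2),
              p - 1 = q - 1 → p = q := by
            intro p hp q hq h
            simp only [Finset.mem_Icc] at hp hq
            omega
          rw [show ∑ k ∈ Finset.Icc 2 (N-2), 1/((k-1:ℕ):ℝ)^2
              = ∑ l ∈ (Finset.Icc 2 (N-2)).image (· - 1), 1/((l:ℕ):ℝ)^2 from
            (Finset.sum_image (f := fun l : ℕ => 1/((l:ℕ):ℝ)^2) hinj).symm]
          exact basel_partial _
        have p2 : ∑ k ∈ Finset.Icc 2 (N-2), 1/((N-k-1:ℕ):ℝ)^2 ≤ π^2/6 := by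
          have hinj : ∀ p ∈ Finset.Icc 2 (N-2), ∀ q ∈ Finset.Icc 2 (N-2),
              N - p - 1 = N - q - 1 → p = q := by
            intro p hp q hq h
            simp only [Finset.mem_Icc] at hp hq
            omega
          rw [show ∑ k ∈ Finset.Icc 2 (N-2), 1/((N-k-1:ℕ):ℝ)^2
              = ∑ l ∈ (Finset.Icc 2 (N-2)).image (fun k => N - k - 1), 1/((l:ℕ):ℝ)^2 from
            (Finset.sum_image (f := fun l : ℕ => 1/((l:ℕ):ℝ)^2) hinj).symm]
          exact basel_partial _
        linarith
    _ ≤ 2 * π^2 * ((N-2).factorial : ℝ) := by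
        have hfac : N.factorial = N * ((N-1) * (N-2).factorial) := by
          rw [show N = ((N-2)+1)+1 by omega, Nat.factorial_succ, Nat.factorial_succ]
          rw [show (N-2)+1+1-1 = (N-2)+1 by omega, show (N-2)+1+1-2 = N-2 by omega]
        have hfac' : (N.factorial : ℝ) = ((N:ℕ):ℝ) * (((N-1:ℕ):ℝ) * ((N-2).factorial : ℝ)) := by
          rw [hfac]; push_cast; ring
        have hNN : ((N:ℕ):ℝ) * ((N-1:ℕ):ℝ) ≤ 3 * M^2 := by
          have hx : (4:ℝ) ≤ (N:ℝ) := by exact_mod_cast hN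
          have c1 : ((N-1:ℕ):ℝ) = (N:ℝ) - 1 := by
            rw [Nat.cast_sub (by omega)]; norm_num
          have c2 : M = (N:ℝ) - 2 := by
            rw [hM, Nat.cast_sub (by omega)]; norm_num
          rw [c1, c2]
          nlinarith [mul_nonneg (by linarith : (0:ℝ) ≤ (N:ℝ)-4)
            (by linarith : (0:ℝ) ≤ 2*(N:ℝ)-3)]
        rw [hfac']
        have hF : (0:ℝ) ≤ ((N-2).factorial : ℝ) := by positivity
        calc ((N:ℕ):ℝ) * (((N-1:ℕ):ℝ) * ((N-2).factorial : ℝ)) * (2/M^2) * (π^2/3)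
            = (((N:ℕ):ℝ) * ((N-1:ℕ):ℝ)) * (((N-2).factorial : ℝ) * (2/M^2) * (π^2/3)) := by
              ring
          _ ≤ (3*M^2) * (((N-2).factorial : ℝ) * (2/M^2) * (π^2/3)) :=
              mul_le_mul_of_nonneg_right hNN (by positivity)
          _ = 2 * π^2 * ((N-2).factorial : ℝ) := by
              field_simp

/-- Key combinatorial inequality (parareg_combo): for `b ≥ 1` and `2bm + n ≥ 4`,
`∑_{2 ≤ 2bi+j ≤ 2bm+n-2} (2bi+j-2)! (2b(m-i)+n-j-2)! / (i! j! (m-i)! (n-j)!)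
  ≤ 2π² (2bm+n-2)! / (m! n!)`. -/
theorem parareg_combo (b m n : ℕ) (hb : 1 ≤ b) (hmn : 4 ≤ 2 * b * m + n) :
    ∑ i ∈ Finset.range (m + 1), ∑ j ∈ Finset.range (n + 1),
        (if 2 ≤ 2 * b * i + j ∧ 2 * b * i + j ≤ 2 * b * m + n - 2 then
          (Nat.factorial (2 * b * i + j - 2) : ℝ)
            * (Nat.factorial (2 * b * (m - i) + n - j - 2) : ℝ)
            / ((Nat.factorial i : ℝ) * (Nat.factorial j : ℝ)
              * (Nat.factorial (m - i) : ℝ) * (Nat.factorial (n - j) : ℝ))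
        else 0)
      ≤ 2 * π ^ 2 * (Nat.factorial (2 * b * m + n - 2) : ℝ)
          / ((Nat.factorial m : ℝ) * (Nat.factorial n : ℝ)) := by
  rw [← Finset.sum_product']
  have hstep : ∀ p ∈ Finset.range (m+1) ×ˢ Finset.range (n+1),
      (if 2 ≤ 2 * b * p.1 + p.2 ∧ 2 * b * p.1 + p.2 ≤ 2 * b * m + n - 2 then
          (Nat.factorial (2 * b * p.1 + p.2 - 2) : ℝ)
            * (Nat.factorial (2 * b * (m - p.1) + n - p.2 - 2) : ℝ)
            / ((Nat.factorial p.1 : ℝ) * (Nat.factorial p.2 : ℝ)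
              * (Nat.factorial (m - p.1) : ℝ) * (Nat.factorial (n - p.2) : ℝ))
        else 0)
      = ((if 2 ≤ 2*b*p.1 + p.2 ∧ 2*b*p.1 + p.2 ≤ 2*b*m + n - 2 then
            m.choose p.1 * n.choose p.2 * (2*b*p.1+p.2-2).factorial
              * (2*b*m+n-(2*b*p.1+p.2)-2).factorial
          else 0 : ℕ) : ℝ) / ((Nat.factorial m : ℝ) * (Nat.factorial n : ℝ)) := by
    intro p hp
    simp only [Finset.mem_product, Finset.mem_range] at hp
    have hi : p.1 ≤ m := by omega
    have hj : p.2 ≤ n := by omega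
    by_cases hc : 2 ≤ 2 * b * p.1 + p.2 ∧ 2 * b * p.1 + p.2 ≤ 2 * b * m + n - 2
    · rw [if_pos hc, if_pos hc]
      have harg : 2*b*(m-p.1)+n-p.2-2 = 2*b*m+n-(2*b*p.1+p.2)-2 := by
        have hsub : 2*b*(m-p.1) + 2*b*p.1 = 2*b*m := by
          rw [← Nat.mul_add, Nat.sub_add_cancel hi]
        omega
      rw [harg]
      have hm' : (m.choose p.1 : ℝ) * (p.1.factorial : ℝ) * ((m-p.1).factorial : ℝ)
          = (m.factorial : ℝ) := by
        exact_mod_cast congrArg (Nat.cast (R := ℝ))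
          (Nat.choose_mul_factorial_mul_factorial hi)
      have hn' : (n.choose p.2 : ℝ) * (p.2.factorial : ℝ) * ((n-p.2).factorial : ℝ)
          = (n.factorial : ℝ) := by
        exact_mod_cast congrArg (Nat.cast (R := ℝ))
          (Nat.choose_mul_factorial_mul_factorial hj)
      rw [div_eq_div_iff (by positivity) (by positivity)]
      push_cast
      rw [← hm', ← hn']
      ring
    · rw [if_neg hc, if_neg hc]
      simp
  rw [Finset.sum_congr rfl hstep, ← Finset.sum_div, ← Nat.cast_sum]
  have hden : (0:ℝ) < (Nat.factorial m : ℝ) * (Nat.factorial n : ℝ) := by positivity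
  rw [div_le_div_iff_of_pos_right hden]
  calc ((∑ p ∈ Finset.range (m+1) ×ˢ Finset.range (n+1),
        (if 2 ≤ 2*b*p.1 + p.2 ∧ 2*b*p.1 + p.2 ≤ 2*b*m + n - 2 then
            m.choose p.1 * n.choose p.2 * (2*b*p.1+p.2-2).factorial
              * (2*b*m+n-(2*b*p.1+p.2)-2).factorial
          else 0) : ℕ) : ℝ)
      ≤ ((∑ k ∈ Finset.Icc 2 (2*b*m+n-2),
          (2*b*m+n).choose k * (k-2).factorial * (2*b*m+n-k-2).factorial : ℕ) : ℝ) := by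
        exact_mod_cast nat_key b m n hb
    _ = ∑ k ∈ Finset.Icc 2 (2*b*m+n-2),
          (((2*b*m+n).choose k : ℝ) * (((k-2).factorial : ℕ) : ℝ)
            * (((2*b*m+n-k-2).factorial : ℕ) : ℝ)) := by push_cast; ring
    _ ≤ 2 * π^2 * ((2*b*m+n-2).factorial : ℝ) := real_key _ hmn
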